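/- (Hard Lefschetz for 𝔸_ε, injectivity) Let N ≥ 1, m : Fin N → ℕ, let I be the ideal of ℚ[x₁,…,x_N] generated by x₁^{m₁+1},…,x_N^{m_N+1}, let ω = x₁ + ⋯ + x_N and D = ∑ᵢ m i. For every integer k with 2k ≤ D and every homogeneous polynomial p of degree k: if ω^{D−2k} · p ∈ I, then p ∈ I. Equivalently, multiplication by ω^{D−2k} is injective from the degree-k graded piece of ℚ[x₁,…,x_N]/I to the degree-(D−k) piece. -/

import Mathlib

open MvPolynomial Finsupp
namespace HLaux
variable {N : ℕ}

noncomputable def Fop (m : Fin N → ℕ) : MvPolynomial (Fin N) ℚ →ₗ[ℚ] MvPolynomial (Fin N) ℚ :=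
  ∑ i : Fin N, ((m i : ℚ) • ((pderiv i : Derivation ℚ _ _) : MvPolynomial (Fin N) ℚ →ₗ[ℚ] MvPolynomial (Fin N) ℚ)
    - (LinearMap.mulLeft ℚ (X i)) ∘ₗ
      (((pderiv i : Derivation ℚ _ _) : MvPolynomial (Fin N) ℚ →ₗ[ℚ] MvPolynomial (Fin N) ℚ) ∘ₗ
       ((pderiv i : Derivation ℚ _ _) : MvPolynomial (Fin N) ℚ →ₗ[ℚ] MvPolynomial (Fin N) ℚ)))

lemma Fop_apply (m : Fin N → ℕ) (p : MvPolynomial (Fin N) ℚ) :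
    Fop m p = ∑ i : Fin N, ((m i : ℚ) • pderiv i p - X i * pderiv i (pderiv i p)) := by
  simp [Fop, LinearMap.sum_apply, LinearMap.sub_apply, LinearMap.smul_apply, LinearMap.comp_apply,
    LinearMap.mulLeft_apply]

lemma Fop_monomial (m : Fin N → ℕ) (σ : Fin N →₀ ℕ) (c : ℚ) :
    Fop m (monomial σ c) =
      ∑ i : Fin N, monomial (σ - single i 1) (c * (σ i : ℚ) * ((m i : ℚ) + 1 - (σ i : ℚ))) := by
  rw [Fop_apply]
  refine Finset.sum_congr rfl fun i _ => ?_
  rw [pderiv_monomial, pderiv_monomial]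
  have hsub : (σ - single i 1 : Fin N →₀ ℕ) i = σ i - 1 := by simp [tsub_apply]
  rcases (by omega : σ i = 0 ∨ σ i = 1 ∨ 2 ≤ σ i) with h | h | h
  · have h1 : σ - single i 1 = σ := by
      ext j
      rcases eq_or_ne j i with rfl | hne
      · simp [tsub_apply, h]
      · simp [tsub_apply, single_apply, hne.symm]
    simp [h1, h]
  · rw [hsub, h]
    rw [smul_monomial]
    push_cast
    simp
    ring_nf
  · have h3 : single i 1 + (σ - single i 1 - single i 1) = σ - single i 1 := by
      ext j
      rcases eq_or_ne j i with rfl | hne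
      · simp only [Finsupp.add_apply, tsub_apply, single_eq_same]
        omega
      · simp [tsub_apply, single_apply, hne.symm]
    rw [hsub, X, monomial_mul, h3, smul_monomial, one_mul, ← map_sub]
    congr 1
    have : (1:ℕ) ≤ σ i := by omega
    rw [smul_eq_mul]
    push_cast [Nat.cast_sub this]
    ring
variable {N : ℕ}

noncomputable def Isp (m : Fin N → ℕ) : Ideal (MvPolynomial (Fin N) ℚ) :=
  Ideal.span (Set.range fun i : Fin N => (X i : MvPolynomial (Fin N) ℚ) ^ (m i + 1))

lemma monomial_mem_Isp (m : Fin N → ℕ) (σ : Fin N →₀ ℕ) (c : ℚ) (i : Fin N)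
    (hi : m i + 1 ≤ σ i) : monomial σ c ∈ Isp m := by
  have hτ : single i (m i + 1) + (σ - single i (m i + 1)) = σ := by
    ext j
    rcases eq_or_ne j i with rfl | hne
    · simp only [Finsupp.add_apply, tsub_apply, single_eq_same]
      omega
    · simp [tsub_apply, single_apply, hne.symm]
  have key : monomial σ c = (X i : MvPolynomial (Fin N) ℚ) ^ (m i + 1) *
      monomial (σ - single i (m i + 1)) c := by
    rw [X_pow_eq_monomial, monomial_mul, one_mul, hτ]
  rw [key]
  exact Ideal.mul_mem_right _ _ (Ideal.subset_span ⟨i, rfl⟩)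

lemma mem_Isp_iff (m : Fin N → ℕ) (p : MvPolynomial (Fin N) ℚ) :
    p ∈ Isp m ↔ ∀ σ : Fin N →₀ ℕ, (∀ i, σ i ≤ m i) → coeff σ p = 0 := by
  constructor
  · intro hp
    induction hp using Submodule.span_induction with
    | mem x hx =>
      obtain ⟨i, rfl⟩ := hx
      intro σ hσ
      show coeff σ ((X i : MvPolynomial (Fin N) ℚ) ^ (m i + 1)) = 0
      rw [X_pow_eq_monomial, coeff_monomial]
      have : single i (m i + 1) ≠ σ := by
        intro hs
        have := hσ i
        rw [← hs, single_eq_same] at this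
        omega
      rw [if_neg this]
    | zero => simp
    | add x y _ _ hx hy => intro σ hσ; simp [hx σ hσ, hy σ hσ]
    | smul a x hx hax =>
      intro σ hσ
      rw [smul_eq_mul, coeff_mul]
      refine Finset.sum_eq_zero fun uv huv => ?_
      rw [Finset.HasAntidiagonal.mem_antidiagonal] at huv
      have h2 : ∀ i, uv.2 i ≤ m i := fun i => by
        have : uv.1 i + uv.2 i = σ i := by rw [← Finsupp.add_apply, huv]
        have := hσ i; omega
      rw [hax uv.2 h2, mul_zero]
  · intro hgood
    rw [p.as_sum]
    refine Ideal.sum_mem _ fun σ hσ => ?_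
    by_cases hb : ∀ i, σ i ≤ m i
    · rw [hgood σ hb]; simp
    · push_neg at hb
      obtain ⟨i, hi⟩ := hb
      exact monomial_mem_Isp m σ _ i (by omega)

lemma Fop_mem (m : Fin N → ℕ) {p : MvPolynomial (Fin N) ℚ} (hp : p ∈ Isp m) :
    Fop m p ∈ Isp m := by
  have hbad : ∀ σ ∈ p.support, ∃ i, m i + 1 ≤ σ i := by
    intro σ hσ
    by_contra hc; push_neg at hc
    exact (MvPolynomial.mem_support_iff.mp hσ) ((mem_Isp_iff m p).mp hp σ (fun i => by have := hc i; omega))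
  have hrw : Fop m p = ∑ σ ∈ p.support, Fop m (monomial σ (coeff σ p)) := by
    conv_lhs => rw [p.as_sum]
    rw [map_sum]
  rw [hrw]
  refine Ideal.sum_mem _ fun σ hσ => ?_
  rw [Fop_monomial]
  refine Ideal.sum_mem _ fun j _ => ?_
  obtain ⟨i, hi⟩ := hbad σ hσ
  rcases eq_or_ne i j with rfl | hne
  · rcases (by omega : σ i = m i + 1 ∨ m i + 2 ≤ σ i) with h | h
    · have hc0 : coeff σ p * (σ i : ℚ) * ((m i : ℚ) + 1 - (σ i : ℚ)) = 0 := by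
        rw [h]; push_cast; ring
      rw [hc0, map_zero]
      exact Ideal.zero_mem _
    · apply monomial_mem_Isp m _ _ i
      have : (σ - single i 1 : Fin N →₀ ℕ) i = σ i - 1 := by simp [tsub_apply]
      omega
  · apply monomial_mem_Isp m _ _ i
    have : (σ - single j 1 : Fin N →₀ ℕ) i = σ i := by
      simp [tsub_apply, single_eq_of_ne hne]
    omega

lemma degree_add' (f g : Fin N →₀ ℕ) : (f + g).degree = f.degree + g.degree := by
  simp only [Finsupp.degree_eq_weight_one]
  exact map_add _ _ _

lemma degree_single' (i : Fin N) (n : ℕ) : (single i n).degree = n := by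
  rcases eq_or_ne n 0 with rfl | h
  · simp [Finsupp.degree]
  · rw [Finsupp.degree_apply, Finsupp.support_single_ne_zero _ h, Finset.sum_singleton, single_eq_same]

lemma degree_support {p : MvPolynomial (Fin N) ℚ} {k : ℕ} (hp : p.IsHomogeneous k)
    {σ : Fin N →₀ ℕ} (hσ : σ ∈ p.support) : σ.degree = k := by
  have := hp (MvPolynomial.mem_support_iff.mp hσ)
  rw [degree_eq_weight_one]
  exact this

lemma Fop_isHomogeneous (m : Fin N → ℕ) {p : MvPolynomial (Fin N) ℚ} {k : ℕ}
    (hp : p.IsHomogeneous (k + 1)) : (Fop m p).IsHomogeneous k := by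
  conv in p => rw [p.as_sum]
  rw [map_sum]
  apply IsHomogeneous.sum
  intro σ hσ
  rw [Fop_monomial]
  apply IsHomogeneous.sum
  intro i _
  rcases Nat.eq_zero_or_pos (σ i) with h | h
  · have hc0 : coeff σ p * (σ i : ℚ) * ((m i : ℚ) + 1 - (σ i : ℚ)) = 0 := by
      rw [h]; push_cast; ring
    rw [hc0, map_zero]
    exact (homogeneousSubmodule (Fin N) ℚ k).zero_mem
  · apply isHomogeneous_monomial
    have hσdeg : σ.degree = k + 1 := degree_support hp hσ
    have h1 : single i 1 ≤ σ := Finsupp.single_le_iff.mpr h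
    have h2 : (σ - single i 1) + single i 1 = σ := tsub_add_cancel_of_le h1
    have h3 : ((σ - single i 1) + single i 1).degree = (σ - single i 1).degree + 1 := by
      rw [degree_add', degree_single']
    rw [h2, hσdeg] at h3
    omega

lemma Fop_homog_zero (m : Fin N → ℕ) {p : MvPolynomial (Fin N) ℚ}
    (hp : p.IsHomogeneous 0) : Fop m p = 0 := by
  conv in p => rw [p.as_sum]
  rw [map_sum]
  apply Finset.sum_eq_zero
  intro σ hσ
  have h0 : σ = 0 := by
    rw [← Finsupp.degree_eq_zero_iff]
    exact degree_support hp hσ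
  rw [Fop_monomial]
  apply Finset.sum_eq_zero
  intro i _
  rw [h0]
  simp

lemma euler {p : MvPolynomial (Fin N) ℚ} {k : ℕ} (hp : p.IsHomogeneous k) :
    ∑ i : Fin N, X i * pderiv i p = (k : ℚ) • p := by
  have key : ∀ σ ∈ p.support,
      ∑ i : Fin N, X i * pderiv i (monomial σ (coeff σ p)) = (k:ℚ) • monomial σ (coeff σ p) := by
    intro σ hσ
    have hσdeg : σ.degree = k := degree_support hp hσ
    have step1 : ∀ i : Fin N, X i * pderiv i (monomial σ (coeff σ p))
        = monomial σ (coeff σ p * (σ i : ℚ)) := by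
      intro i
      rw [pderiv_monomial]
      rcases Nat.eq_zero_or_pos (σ i) with h | h
      · rw [h]; push_cast; simp
      · have h1 : single i 1 ≤ σ := Finsupp.single_le_iff.mpr h
        rw [X, monomial_mul, one_mul, add_comm, tsub_add_cancel_of_le h1]
    rw [Finset.sum_congr rfl (fun i _ => step1 i)]
    rw [← map_sum (monomial σ), ← Finset.mul_sum]
    rw [smul_monomial]
    congr 1
    have hsum : ∑ i : Fin N, (σ i : ℚ) = (σ.degree : ℚ) := by
      rw [Finsupp.degree_apply]
      push_cast
      exact (Finset.sum_subset (Finset.subset_univ _)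
        (fun x _ hx => by rw [notMem_support_iff.mp hx]; norm_num)).symm
    rw [hsum, hσdeg, smul_eq_mul]
    ring
  conv_lhs => rw [p.as_sum]
  conv_rhs => rw [p.as_sum]
  rw [Finset.smul_sum]
  rw [show (∑ i : Fin N, X i * pderiv i (∑ σ ∈ p.support, monomial σ (coeff σ p)))
      = ∑ i : Fin N, ∑ σ ∈ p.support, X i * pderiv i (monomial σ (coeff σ p)) by
    refine Finset.sum_congr rfl fun i _ => ?_
    rw [map_sum, Finset.mul_sum]]
  rw [Finset.sum_comm]
  exact Finset.sum_congr rfl key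


lemma pderiv_omega (i : Fin N) :
    pderiv i (∑ j : Fin N, X j : MvPolynomial (Fin N) ℚ) = 1 := by
  rw [map_sum]
  rw [Finset.sum_eq_single_of_mem i (Finset.mem_univ i)
    (fun j _ hji => pderiv_X_of_ne hji)]
  exact pderiv_X_self i

lemma comm_gen (m : Fin N → ℕ) (p : MvPolynomial (Fin N) ℚ) :
    Fop m ((∑ j : Fin N, X j) * p) = (∑ j : Fin N, X j) * Fop m p
      + ((∑ i, m i : ℕ) : ℚ) • p - (2:ℚ) • ∑ i : Fin N, X i * pderiv i p := by
  rw [Fop_apply, Fop_apply]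
  have h1 : ∀ i : Fin N, pderiv i ((∑ j : Fin N, X j) * p)
      = p + (∑ j : Fin N, X j) * pderiv i p := by
    intro i
    rw [pderiv_mul, pderiv_omega, one_mul]
  have hcast : ((∑ i, m i : ℕ) : ℚ) • p = ∑ i : Fin N, (m i : ℚ) • p := by
    rw [← Finset.sum_smul]
    congr 1
    push_cast
    rfl
  rw [hcast, Finset.mul_sum, Finset.smul_sum, ← Finset.sum_add_distrib, ← Finset.sum_sub_distrib]
  refine Finset.sum_congr rfl fun i _ => ?_
  rw [h1 i, map_add, pderiv_mul, pderiv_omega, one_mul]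
  simp only [smul_eq_C_mul, map_add, mul_add, map_mul, map_ofNat]
  ring

lemma comm_homog (m : Fin N → ℕ) {p : MvPolynomial (Fin N) ℚ} {k : ℕ}
    (hp : p.IsHomogeneous k) :
    Fop m ((∑ j : Fin N, X j) * p) = (∑ j : Fin N, X j) * Fop m p
      + (((∑ i, m i : ℕ) : ℚ) - 2 * k) • p := by
  rw [comm_gen, euler hp, smul_smul, sub_smul]
  ring_nf

lemma sl2_inj {M : Type*} [AddCommGroup M] [Module ℚ M]
    (e f : M →ₗ[ℚ] M) (W : ℕ → Submodule ℚ M) (Dt : ℕ)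
    (hW1 : ∀ k, ∀ x ∈ W k, e x ∈ W (k + 1))
    (hW0 : ∀ x ∈ W 0, f x = 0)
    (hWf : ∀ k, ∀ x ∈ W (k + 1), f x ∈ W k)
    (hcomm : ∀ k, ∀ x ∈ W k, f (e x) = e (f x) + ((Dt : ℚ) - 2 * k) • x) :
    ∀ k, 2 * k ≤ Dt → ∀ x ∈ W k, (e ^ (Dt - 2 * k)) x = 0 → x = 0 := by
  have hiter : ∀ k x, x ∈ W k → ∀ r, (e ^ r) x ∈ W (k + r) := by
    intro k x hx r
    induction r with
    | zero => simpa using hx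
    | succ r ih =>
      have h : (e ^ (r + 1)) x = e ((e ^ r) x) := by
        rw [pow_succ', Module.End.mul_apply]
      rw [h]
      exact hW1 _ _ ih
  have hcpow : ∀ k x, x ∈ W k → ∀ r : ℕ,
      f ((e ^ (r + 1)) x) = (e ^ (r + 1)) (f x)
        + (((r : ℚ) + 1) * ((Dt : ℚ) - 2 * k - r)) • ((e ^ r) x) := by
    intro k x hx r
    induction r with
    | zero => simpa using hcomm k x hx
    | succ r ih =>
      have hs : ∀ y : M, (e ^ (r + 2)) y = e ((e ^ (r + 1)) y) := fun y => by
        rw [pow_succ', Module.End.mul_apply]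
      have hs1 : ∀ y : M, (e ^ (r + 1)) y = e ((e ^ r) y) := fun y => by
        rw [pow_succ', Module.End.mul_apply]
      rw [hs x, hcomm (k + (r + 1)) _ (hiter k x hx (r + 1)), ih, map_add, map_smul,
        ← hs (f x), ← hs1 x]
      push_cast
      match_scalars <;> ring
  -- finishing lemma, given `f x = 0`
  have hfin : ∀ k x, x ∈ W k → 2 * k ≤ Dt → (e ^ (Dt - 2 * k)) x = 0 → f x = 0 → x = 0 := by
    intro k x hx hk hx0 hfx
    set n := Dt - 2 * k with hndef
    have hnq : (Dt : ℚ) - 2 * (k : ℚ) = (n : ℚ) := by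
      rw [hndef, Nat.cast_sub hk]
      push_cast
      ring
    have hdown : ∀ j, j ≤ n → (e ^ (n - j)) x = 0 := by
      intro j
      induction j with
      | zero => intro _; simpa using hx0
      | succ j ihj =>
        intro hj
        have hprev := ihj (by omega)
        have hr : n - j = (n - (j + 1)) + 1 := by omega
        set r := n - (j + 1) with hrdef
        rw [hr] at hprev
        have hc := hcpow k x hx r
        rw [hprev, hfx, map_zero, map_zero, zero_add, hnq] at hc
        have hrn : (r : ℚ) < (n : ℚ) := by exact_mod_cast (by omega : r < n)
        have hcoef : ((r : ℚ) + 1) * ((n : ℚ) - r) ≠ 0 := by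
          apply mul_ne_zero
          · positivity
          · exact ne_of_gt (sub_pos.mpr hrn)
        exact (smul_eq_zero.mp hc.symm).resolve_left hcoef
    have := hdown n le_rfl
    simpa using this
  intro k
  induction k with
  | zero =>
    intro hk x hx hx0
    exact hfin 0 x hx hk hx0 (hW0 x hx)
  | succ j ihk =>
    intro hk x hx hx0
    set n := Dt - 2 * (j + 1) with hndef
    have hfx : f x = 0 := by
      apply ihk (by omega) (f x) (hWf j x hx)
      have h2 : Dt - 2 * j = (n + 1) + 1 := by omega
      rw [h2]
      have ha : (e ^ (n + 1)) x = 0 := by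
        rw [pow_succ', Module.End.mul_apply, hx0, map_zero]
      have hc := hcpow (j + 1) x hx n
      rw [ha, hx0, smul_zero, map_zero, add_zero] at hc
      rw [pow_succ', Module.End.mul_apply, ← hc, map_zero]
    exact hfin (j + 1) x hx hk hx0 hfx

end HLaux

open MvPolynomial

/-- Hard Lefschetz (injectivity) for `𝔸_ε = ℚ[x₁,…,x_N]/(x_i^{m_i+1})`: multiplication by
`ω^{D-2k}`, where `ω = x₁ + ⋯ + x_N` and `D = ∑ m i`, is injective from degree `k` to
degree `D - k` for `2k ≤ D`. -/
theorem hard_lefschetz_injective (N : ℕ) (hN : 1 ≤ N) (m : Fin N → ℕ)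
    (I : Ideal (MvPolynomial (Fin N) ℚ))
    (hI : I = Ideal.span (Set.range fun i : Fin N => (X i : MvPolynomial (Fin N) ℚ) ^ (m i + 1)))
    (k : ℕ) (hk : 2 * k ≤ ∑ i, m i)
    (p : MvPolynomial (Fin N) ℚ) (hp : p.IsHomogeneous k)
    (h : (∑ i, X i : MvPolynomial (Fin N) ℚ) ^ ((∑ i, m i) - 2 * k) * p ∈ I) :
    p ∈ I := by
  have hI' : I = HLaux.Isp m := hI
  subst hI'
  set ω : MvPolynomial (Fin N) ℚ := ∑ j : Fin N, X j with hω
  set Dt := ∑ i, m i with hDt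
  set Im : Submodule ℚ (MvPolynomial (Fin N) ℚ) :=
    Submodule.restrictScalars ℚ (HLaux.Isp m) with hIm
  set π : MvPolynomial (Fin N) ℚ →ₗ[ℚ] (MvPolynomial (Fin N) ℚ ⧸ Im) := Im.mkQ with hπ
  set E : MvPolynomial (Fin N) ℚ →ₗ[ℚ] MvPolynomial (Fin N) ℚ := LinearMap.mulLeft ℚ ω with hE
  have homog_omega : ω.IsHomogeneous 1 :=
    IsHomogeneous.sum _ _ _ fun i _ => isHomogeneous_X _ _
  have hEI : Im ≤ Im.comap E := fun q hq => Ideal.mul_mem_left _ _ hq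
  have hFI : Im ≤ Im.comap (HLaux.Fop m) := fun q hq => HLaux.Fop_mem m hq
  set eQ := Submodule.mapQ Im Im E hEI with heQ
  set fQ := Submodule.mapQ Im Im (HLaux.Fop m) hFI with hfQ
  have happ : ∀ (g : MvPolynomial (Fin N) ℚ →ₗ[ℚ] MvPolynomial (Fin N) ℚ)
      (hg : Im ≤ Im.comap g) (q : MvPolynomial (Fin N) ℚ),
      (Submodule.mapQ Im Im g hg) (π q) = π (g q) := by
    intro g hg q
    rw [hπ, Submodule.mkQ_apply, Submodule.mapQ_apply, Submodule.mkQ_apply]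
  set W : ℕ → Submodule ℚ (MvPolynomial (Fin N) ℚ ⧸ Im) :=
    fun n => Submodule.map π (homogeneousSubmodule (Fin N) ℚ n) with hW
  have hmemW : ∀ (n : ℕ) (q : MvPolynomial (Fin N) ℚ), q.IsHomogeneous n → π q ∈ W n :=
    fun n q hq => Submodule.mem_map_of_mem ((mem_homogeneousSubmodule n q).mpr hq)
  have heapp : ∀ q : MvPolynomial (Fin N) ℚ, eQ (π q) = π (E q) := fun q => happ E hEI q
  have hfapp : ∀ q : MvPolynomial (Fin N) ℚ, fQ (π q) = π (HLaux.Fop m q) :=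
    fun q => happ (HLaux.Fop m) hFI q
  have hW1 : ∀ n, ∀ x ∈ W n, eQ x ∈ W (n + 1) := by
    rintro n x ⟨q, hq, rfl⟩
    rw [heapp]
    apply hmemW
    have := homog_omega.mul (hq : q.IsHomogeneous n)
    rwa [add_comm] at this
  have hW0 : ∀ x ∈ W 0, fQ x = 0 := by
    rintro x ⟨q, hq, rfl⟩
    rw [hfapp, HLaux.Fop_homog_zero m hq, map_zero]
  have hWf : ∀ n, ∀ x ∈ W (n + 1), fQ x ∈ W n := by
    rintro n x ⟨q, hq, rfl⟩
    rw [hfapp]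
    exact hmemW _ _ (HLaux.Fop_isHomogeneous m hq)
  have hcomm : ∀ n, ∀ x ∈ W n, fQ (eQ x) = eQ (fQ x) + ((Dt : ℚ) - 2 * n) • x := by
    rintro n x ⟨q, hq, rfl⟩
    have hEq : E q = ω * q := rfl
    rw [heapp, hfapp, hfapp, heapp, hEq, HLaux.comm_homog m hq, map_add, map_smul]
    rfl
  have hEpow : ∀ (r : ℕ) (q : MvPolynomial (Fin N) ℚ), (E ^ r) q = ω ^ r * q := by
    intro r
    induction r with
    | zero => intro q; simp
    | succ r ih =>
      intro q
      rw [pow_succ, Module.End.mul_apply, ih (E q)]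
      show ω ^ r * (ω * q) = ω ^ (r + 1) * q
      ring
  have hpow : ∀ (r : ℕ) (q : MvPolynomial (Fin N) ℚ), (eQ ^ r) (π q) = π ((E ^ r) q) := by
    intro r
    induction r with
    | zero => intro q; simp
    | succ r ih =>
      intro q
      rw [pow_succ, Module.End.mul_apply, heapp, ih (E q), pow_succ, Module.End.mul_apply]
  have hpW : π p ∈ W k := hmemW k p hp
  have hmain := HLaux.sl2_inj eQ fQ W Dt hW1 hW0 hWf hcomm k hk (π p) hpW
  have hz : (eQ ^ (Dt - 2 * k)) (π p) = 0 := by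
    rw [hpow, hEpow, hπ, Submodule.mkQ_apply, Submodule.Quotient.mk_eq_zero]
    exact h
  have hfin := hmain hz
  rw [hπ, Submodule.mkQ_apply, Submodule.Quotient.mk_eq_zero] at hfin
  exact hfin
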